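/- arXiv:2511.20466 — 2 statements merged into one kernel-verified Lean document; each statement's English description precedes it below -/
import Mathlib

section
/- Fix γ ∈ (0,1) and σ > 0. Define for x > 0 the quadratic forms ς²(x) = ∇F(x)ᵀ Σ ∇F(x) and ς²_{MLE}(x) = ∇F(x)ᵀ Σ^{MLE} ∇F(x), where ∇F(x) = (D_γ(x), D_σ(x)) with D_γ(x) = −(1 + γx/σ)^{−1/γ}( log(1 + γx/σ)/γ² − (x/(γσ))/(1 + γx/σ) ) and D_σ(x) = −(x/σ²)(1 + γx/σ)^{−1/γ−1}. Then the ratio ς²(x)/ς²_{MLE}(x) tends, as x → 0⁺, to 2( 8γ⁵ − 84γ⁴ + 374γ³ − 843γ² + 944γ − 423 ) / ( 3(γ−3)²(γ+1)(2γ−3)³ ); in particular this limit does not depend on σ. -/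
open Real Matrix Filter Topology

/-- Partial derivative of the GPD cdf `F_{γ,σ}(x)` with respect to the shape parameter γ. -/
noncomputable def Dgamma (γ σ x : ℝ) : ℝ :=
  -(1 + γ * x / σ) ^ (-1 / γ : ℝ) *
    (Real.log (1 + γ * x / σ) / γ ^ 2 - (x / (γ * σ)) / (1 + γ * x / σ))

/-- Partial derivative of the GPD cdf `F_{γ,σ}(x)` with respect to the scale parameter σ. -/
noncomputable def Dsigma (γ σ x : ℝ) : ℝ :=
  -(x / σ ^ 2) * (1 + γ * x / σ) ^ (-1 / γ - 1 : ℝ)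

/-- Asymptotic covariance matrix of the `L²` minimum distance estimator of `(γ,σ)`. -/
noncomputable def SigmaMDE (γ σ : ℝ) : Matrix (Fin 2) (Fin 2) ℝ :=
  !![4 * (γ - 2) ^ 4 * (γ * (γ * (2 * γ * (4 * γ ^ 2 - 58 * γ + 243) - 683) + 452) - 639) /
       (3 * (γ - 6) ^ 2 * (γ - 3) ^ 2 * (2 * γ - 3) ^ 3),
     4 * (γ - 2) ^ 2 * (γ * (γ * (2 * γ * (4 * γ ^ 2 - 50 * γ + 207) - 791) + 778) - 387) * σ /
       (3 * (γ - 6) * (γ - 3) ^ 2 * (2 * γ - 3) ^ 3);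
     4 * (γ - 2) ^ 2 * (γ * (γ * (2 * γ * (4 * γ ^ 2 - 50 * γ + 207) - 791) + 778) - 387) * σ /
       (3 * (γ - 6) * (γ - 3) ^ 2 * (2 * γ - 3) ^ 3),
     4 * (γ * (γ * (8 * γ ^ 3 - 84 * γ ^ 2 + 374 * γ - 843) + 944) - 423) * σ ^ 2 /
       (3 * (γ - 3) ^ 2 * (2 * γ - 3) ^ 3)]

/-- Asymptotic covariance matrix of the maximum likelihood estimator of `(γ,σ)`. -/
noncomputable def SigmaMLE (γ σ : ℝ) : Matrix (Fin 2) (Fin 2) ℝ :=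
  !![(γ + 1) ^ 2, -((γ + 1) * σ); -((γ + 1) * σ), 2 * (γ + 1) * σ ^ 2]

/-- Asymptotic variance of the MDE plug-in survival estimate,
`ς²(x) = ∇F(x)ᵀ Σ ∇F(x)`. -/
noncomputable def varMDE (γ σ x : ℝ) : ℝ :=
  ![Dgamma γ σ x, Dsigma γ σ x] ⬝ᵥ (SigmaMDE γ σ).mulVec ![Dgamma γ σ x, Dsigma γ σ x]

/-- Asymptotic variance of the MLE plug-in survival estimate,
`ς²_{MLE}(x) = ∇F(x)ᵀ Σ^{MLE} ∇F(x)`. -/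
noncomputable def varMLE (γ σ x : ℝ) : ℝ :=
  ![Dgamma γ σ x, Dsigma γ σ x] ⬝ᵥ (SigmaMLE γ σ).mulVec ![Dgamma γ σ x, Dsigma γ σ x]

/-- A ratio of quadratic forms in `(u,v)` only depends on `u/v` when `v ≠ 0`. -/
lemma quad_div (a b c a' b' c' u v : ℝ) (hv : v ≠ 0) :
    (a*u^2 + b*(u*v) + c*v^2) / (a'*u^2 + b'*(u*v) + c'*v^2)
      = (a*(u/v)^2 + b*(u/v) + c) / (a'*(u/v)^2 + b'*(u/v) + c') := by
  have h1 : a*(u/v)^2 + b*(u/v) + c = (a*u^2 + b*(u*v) + c*v^2)/v^2 := by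
    field_simp
  have h2 : a'*(u/v)^2 + b'*(u/v) + c' = (a'*u^2 + b'*(u*v) + c'*v^2)/v^2 := by
    field_simp
  rw [h1, h2, div_div_div_eq, mul_comm (v^2), mul_div_mul_right _ _ (pow_ne_zero 2 hv)]

lemma Dratio_eq (γ σ : ℝ) (hγ : 0 < γ) (hσ : 0 < σ) (x : ℝ) (hx : 0 < x) :
    Dgamma γ σ x / Dsigma γ σ x
      = σ^2/γ^2 * ((1 + γ*x/σ) * (Real.log (1+γ*x/σ) / x)) - σ/γ := by
  have ht : 0 < 1 + γ*x/σ := by positivity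
  have hc : (1+γ*x/σ) ^ (-1/γ - 1 : ℝ) ≠ 0 := ne_of_gt (Real.rpow_pos_of_pos ht _)
  have hA : (1+γ*x/σ) ^ (-1/γ : ℝ) = (1+γ*x/σ) ^ (-1/γ - 1 : ℝ) * (1+γ*x/σ) := by
    rw [← Real.rpow_add_one ht.ne' (-1/γ - 1)]
    norm_num
  unfold Dgamma Dsigma
  rw [hA]
  field_simp

lemma Dratio_tendsto (γ σ : ℝ) (hγ : 0 < γ) (hσ : 0 < σ) :
    Tendsto (fun x => Dgamma γ σ x / Dsigma γ σ x) (𝓝[>] (0:ℝ)) (𝓝 0) := by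
  have hL : Tendsto (fun x => Real.log (1 + γ*x/σ)/x) (𝓝[>] (0:ℝ)) (𝓝 (γ/σ)) := by
    have hd : HasDerivAt (fun x : ℝ => Real.log (1 + γ*x/σ)) (γ/σ) 0 := by
      have h1 : HasDerivAt (fun x : ℝ => 1 + γ*x/σ) (γ/σ) 0 := by
        simpa using (((hasDerivAt_id (0:ℝ)).const_mul γ).div_const σ).const_add 1
      have h2 := h1.log (by norm_num)
      simpa using h2
    have hs := hasDerivAt_iff_tendsto_slope.mp hd
    have heq : ∀ x : ℝ, slope (fun x : ℝ => Real.log (1 + γ*x/σ)) 0 x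
        = Real.log (1 + γ*x/σ)/x := by
      intro x
      simp [slope_def_field, div_eq_iff]
    exact (hs.congr' (Filter.Eventually.of_forall heq)).mono_left
      (nhdsWithin_mono _ (fun y hy => ne_of_gt hy))
  have h1t : Tendsto (fun x : ℝ => 1 + γ*x/σ) (𝓝[>] (0:ℝ)) (𝓝 1) := by
    have hca : ContinuousAt (fun x : ℝ => 1 + γ*x/σ) 0 := by fun_prop
    have h2 : Tendsto (fun x : ℝ => 1 + γ*x/σ) (𝓝[>] (0:ℝ)) (𝓝 (1 + γ*0/σ)) :=
      hca.tendsto.mono_left nhdsWithin_le_nhds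
    simpa using h2
  have hmain : Tendsto (fun x => σ^2/γ^2 * ((1 + γ*x/σ) * (Real.log (1+γ*x/σ) / x)) - σ/γ)
      (𝓝[>] (0:ℝ)) (𝓝 0) := by
    have hprod : Tendsto (fun x => σ^2/γ^2 * ((1 + γ*x/σ) * (Real.log (1+γ*x/σ) / x)) - σ/γ)
        (𝓝[>] (0:ℝ)) (𝓝 (σ^2/γ^2 * (1 * (γ/σ)) - σ/γ)) :=
      (tendsto_const_nhds.mul (h1t.mul hL)).sub tendsto_const_nhds
    have hval : σ^2/γ^2 * (1 * (γ/σ)) - σ/γ = 0 := by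
      field_simp
      ring
    rw [hval] at hprod
    exact hprod
  refine hmain.congr' ?_
  filter_upwards [self_mem_nhdsWithin] with x hx
  exact (Dratio_eq γ σ hγ hσ x hx).symm

/-- as `x → 0⁺`, the relative efficiency `ς²(x)/ς²_{MLE}(x)` tends to a limit
that depends only on γ, not on σ. -/
theorem relative_efficiency_limit_at_zero (γ : ℝ) (hγ : γ ∈ Set.Ioo (0 : ℝ) 1)
    (σ : ℝ) (hσ : 0 < σ) :
    Tendsto (fun x : ℝ => varMDE γ σ x / varMLE γ σ x) (𝓝[>] 0)
      (𝓝 (2 * (8 * γ ^ 5 - 84 * γ ^ 4 + 374 * γ ^ 3 - 843 * γ ^ 2 + 944 * γ - 423) /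
        (3 * (γ - 3) ^ 2 * (γ + 1) * (2 * γ - 3) ^ 3))) := by
  obtain ⟨hγ0, hγ1⟩ := hγ
  set a := 4 * (γ - 2) ^ 4 * (γ * (γ * (2 * γ * (4 * γ ^ 2 - 58 * γ + 243) - 683) + 452) - 639) /
       (3 * (γ - 6) ^ 2 * (γ - 3) ^ 2 * (2 * γ - 3) ^ 3) with ha
  set b := 2 * (4 * (γ - 2) ^ 2 * (γ * (γ * (2 * γ * (4 * γ ^ 2 - 50 * γ + 207) - 791) + 778) - 387) * σ /
       (3 * (γ - 6) * (γ - 3) ^ 2 * (2 * γ - 3) ^ 3)) with hb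
  set c := 4 * (γ * (γ * (8 * γ ^ 3 - 84 * γ ^ 2 + 374 * γ - 843) + 944) - 423) * σ ^ 2 /
       (3 * (γ - 3) ^ 2 * (2 * γ - 3) ^ 3) with hc
  set a' := (γ + 1) ^ 2 with ha'
  set b' := 2 * (-((γ + 1) * σ)) with hb'
  set c' := 2 * (γ + 1) * σ ^ 2 with hc'
  have hc'ne : a' * (0:ℝ)^2 + b' * 0 + c' ≠ 0 := by
    simp only [hc']
    nlinarith [sq_nonneg σ, sq_nonneg (γ+1)]
  have hcont : ContinuousAt (fun r : ℝ => (a*r^2 + b*r + c) / (a'*r^2 + b'*r + c')) 0 := by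
    apply ContinuousAt.div
    · fun_prop
    · fun_prop
    · exact hc'ne
  have hlim := hcont.tendsto.comp (Dratio_tendsto γ σ hγ0 hσ)
  have hval : (a*(0:ℝ)^2 + b*0 + c) / (a'*(0:ℝ)^2 + b'*0 + c')
      = 2 * (8 * γ ^ 5 - 84 * γ ^ 4 + 374 * γ ^ 3 - 843 * γ ^ 2 + 944 * γ - 423) /
        (3 * (γ - 3) ^ 2 * (γ + 1) * (2 * γ - 3) ^ 3) := by
    have h3 : (γ - 3) ≠ 0 := by nlinarith
    have h23 : (2*γ - 3) ≠ 0 := by nlinarith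
    have hp1 : (γ + 1) ≠ 0 := by nlinarith
    simp only [ha, hb, hc, ha', hb', hc']
    field_simp
    ring
  rw [← hval]
  refine hlim.congr' ?_
  filter_upwards [self_mem_nhdsWithin] with x hx
  have hx' : (0:ℝ) < x := hx
  have ht : 0 < 1 + γ*x/σ := by positivity
  have hvne : Dsigma γ σ x ≠ 0 := by
    unfold Dsigma
    have h1 : (1 + γ*x/σ) ^ (-1/γ - 1 : ℝ) ≠ 0 := ne_of_gt (Real.rpow_pos_of_pos ht _)
    have h2 : -(x / σ^2) ≠ 0 := by
      have hpos : 0 < x / σ^2 := by positivity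
      linarith
    exact mul_ne_zero h2 h1
  have hMDE : varMDE γ σ x = a * (Dgamma γ σ x)^2 + b * (Dgamma γ σ x * Dsigma γ σ x)
      + c * (Dsigma γ σ x)^2 := by
    rw [ha, hb, hc]
    simp [varMDE, SigmaMDE, Matrix.mulVec, dotProduct, Fin.sum_univ_two]
    ring
  have hMLE : varMLE γ σ x = a' * (Dgamma γ σ x)^2 + b' * (Dgamma γ σ x * Dsigma γ σ x)
      + c' * (Dsigma γ σ x)^2 := by
    rw [ha', hb', hc']
    simp [varMLE, SigmaMLE, Matrix.mulVec, dotProduct, Fin.sum_univ_two]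
    ring
  simp only [Function.comp_apply]
  rw [hMDE, hMLE, quad_div a b c a' b' c' _ _ hvne]
end

section
/- Fix γ ∈ (0,1) and σ > 0. Define for x > 0 the quadratic forms ς²(x) = ∇F(x)ᵀ Σ ∇F(x) and ς²_{MLE}(x) = ∇F(x)ᵀ Σ^{MLE} ∇F(x), where ∇F(x) = (D_γ(x), D_σ(x)) with D_γ(x) = −(1 + γx/σ)^{−1/γ}( log(1 + γx/σ)/γ² − (x/(γσ))/(1 + γx/σ) ) and D_σ(x) = −(x/σ²)(1 + γx/σ)^{−1/γ−1}. Then the ratio ς²(x)/ς²_{MLE}(x) tends, as x → ∞, to −4(γ−2)⁴( γ(γ(2γ(4γ² − 58γ + 243) − 683) + 452) − 639 ) / ( 3(3−2γ)³(γ−6)²(γ−3)²(γ+1)² ); in particular this limit does not depend on σ. -/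
open Real Matrix Filter Topology

/-! ### Auxiliary definitions and lemmas -/

/-- Top-left entry of `SigmaMDE`. -/
noncomputable def A11 (γ : ℝ) : ℝ :=
  4 * (γ - 2) ^ 4 * (γ * (γ * (2 * γ * (4 * γ ^ 2 - 58 * γ + 243) - 683) + 452) - 639) /
       (3 * (γ - 6) ^ 2 * (γ - 3) ^ 2 * (2 * γ - 3) ^ 3)

/-- Off-diagonal entry of `SigmaMDE`. -/
noncomputable def A12 (γ σ : ℝ) : ℝ :=
  4 * (γ - 2) ^ 2 * (γ * (γ * (2 * γ * (4 * γ ^ 2 - 50 * γ + 207) - 791) + 778) - 387) * σ /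
       (3 * (γ - 6) * (γ - 3) ^ 2 * (2 * γ - 3) ^ 3)

/-- Bottom-right entry of `SigmaMDE`. -/
noncomputable def A22 (γ σ : ℝ) : ℝ :=
  4 * (γ * (γ * (8 * γ ^ 3 - 84 * γ ^ 2 + 374 * γ - 843) + 944) - 423) * σ ^ 2 /
       (3 * (γ - 3) ^ 2 * (2 * γ - 3) ^ 3)

lemma tt_tendsto (γ σ : ℝ) (hγ : 0 < γ) (hσ : 0 < σ) :
    Tendsto (fun x : ℝ => 1 + γ * x / σ) atTop atTop := by
  apply tendsto_atTop_add_const_left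
  have h : Tendsto (fun x : ℝ => γ / σ * x) atTop atTop :=
    Tendsto.const_mul_atTop (div_pos hγ hσ) tendsto_id
  exact h.congr fun x => by ring

lemma aux_f (γ σ : ℝ) (hγ : 0 < γ) (hσ : 0 < σ) :
    Tendsto (fun x : ℝ => x / σ ^ 2 * (1 + γ * x / σ)⁻¹) atTop (𝓝 ((γ * σ)⁻¹)) := by
  have h0 : Tendsto (fun x : ℝ => σ ^ 2 / x + γ * σ) atTop (𝓝 (0 + γ * σ)) :=
    (tendsto_const_nhds.div_atTop tendsto_id).add tendsto_const_nhds
  rw [zero_add] at h0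
  have h1 : Tendsto (fun x : ℝ => (σ ^ 2 / x + γ * σ)⁻¹) atTop (𝓝 ((γ * σ)⁻¹)) :=
    h0.inv₀ (by positivity)
  refine h1.congr' ?_
  filter_upwards [eventually_gt_atTop 0] with x hx
  have ht : (0:ℝ) < 1 + γ * x / σ := by positivity
  field_simp

lemma aux_A (γ σ : ℝ) (hγ : 0 < γ) (hσ : 0 < σ) :
    Tendsto (fun x : ℝ => Real.log (1 + γ * x / σ) / γ ^ 2 -
      (x / (γ * σ)) / (1 + γ * x / σ)) atTop atTop := by
  have h1 : Tendsto (fun x : ℝ => Real.log (1 + γ * x / σ) / γ ^ 2) atTop atTop :=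
    (Real.tendsto_log_atTop.comp (tt_tendsto γ σ hγ hσ)).atTop_div_const (by positivity)
  have h2 : Tendsto (fun x : ℝ => -((x / (γ * σ)) / (1 + γ * x / σ))) atTop
      (𝓝 (-(σ / γ * (γ * σ)⁻¹))) := by
    have h3 := ((aux_f γ σ hγ hσ).const_mul (σ / γ)).neg
    refine h3.congr fun x => ?_
    rw [div_eq_mul_inv (x / (γ * σ)),
      show x / (γ * σ) = σ / γ * (x / σ ^ 2) by
        rw [div_mul_div_comm, div_eq_div_iff (by positivity) (by positivity)]; ring]
    ring
  exact (h1.atTop_add h2).congr fun x => by ring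

lemma A_pos (γ σ x : ℝ) (hγ : 0 < γ) (hσ : 0 < σ) (hx : 0 < x) :
    0 < Real.log (1 + γ * x / σ) / γ ^ 2 - (x / (γ * σ)) / (1 + γ * x / σ) := by
  have ht1 : (1:ℝ) < 1 + γ * x / σ := by
    have : 0 < γ * x / σ := by positivity
    linarith
  have ht0 : (0:ℝ) < 1 + γ * x / σ := by linarith
  have hlog : 1 - (1 + γ * x / σ)⁻¹ < Real.log (1 + γ * x / σ) := by
    have h := Real.log_lt_sub_one_of_pos (inv_pos.mpr ht0)
      (by
        intro h
        rw [inv_eq_one] at h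
        linarith)
    rw [Real.log_inv] at h
    linarith
  have key : (x / (γ * σ)) / (1 + γ * x / σ) = (1 - (1 + γ * x / σ)⁻¹) / γ ^ 2 := by
    rw [div_eq_div_iff ht0.ne' (by positivity), sub_mul, one_mul, inv_mul_cancel₀ ht0.ne']
    field_simp
    ring
  rw [key, div_sub_div_same]
  exact div_pos (by linarith) (by positivity)

lemma Dgamma_neg (γ σ x : ℝ) (hγ : 0 < γ) (hσ : 0 < σ) (hx : 0 < x) :
    Dgamma γ σ x < 0 := by
  have ht0 : (0:ℝ) < 1 + γ * x / σ := by positivity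
  have hp : (0:ℝ) < (1 + γ * x / σ) ^ (-1 / γ : ℝ) := Real.rpow_pos_of_pos ht0 _
  have hA := A_pos γ σ x hγ hσ hx
  unfold Dgamma
  nlinarith [mul_pos hp hA]

lemma ratio_tendsto (γ σ : ℝ) (hγ : 0 < γ) (hσ : 0 < σ) :
    Tendsto (fun x => Dsigma γ σ x / Dgamma γ σ x) atTop (𝓝 0) := by
  have hmain : Tendsto (fun x : ℝ => (x / σ ^ 2 * (1 + γ * x / σ)⁻¹) *
      (Real.log (1 + γ * x / σ) / γ ^ 2 - (x / (γ * σ)) / (1 + γ * x / σ))⁻¹) atTop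
      (𝓝 ((γ * σ)⁻¹ * 0)) :=
    (aux_f γ σ hγ hσ).mul (aux_A γ σ hγ hσ).inv_tendsto_atTop
  rw [mul_zero] at hmain
  refine hmain.congr' ?_
  filter_upwards [eventually_gt_atTop 0] with x hx
  have ht0 : (0:ℝ) < 1 + γ * x / σ := by positivity
  have hp : (0:ℝ) < (1 + γ * x / σ) ^ (-1 / γ : ℝ) := Real.rpow_pos_of_pos ht0 _
  have hA := A_pos γ σ x hγ hσ hx
  show _ = Dsigma γ σ x / Dgamma γ σ x
  unfold Dsigma Dgamma
  rw [show (-1 / γ - 1 : ℝ) = -1 / γ + (-1) by ring, Real.rpow_add ht0, Real.rpow_neg_one,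
    ← div_eq_mul_inv (x / σ ^ 2 * (1 + γ * x / σ)⁻¹),
    div_eq_div_iff hA.ne' (mul_ne_zero (neg_ne_zero.mpr hp.ne') hA.ne')]
  ring

lemma quad_ratio (a b c d e f Dg Ds : ℝ) (hDg : Dg ≠ 0) :
    (a + 2 * b * (Ds / Dg) + c * (Ds / Dg) ^ 2) /
      (d + 2 * e * (Ds / Dg) + f * (Ds / Dg) ^ 2) =
    (a * Dg ^ 2 + 2 * b * (Dg * Ds) + c * Ds ^ 2) /
      (d * Dg ^ 2 + 2 * e * (Dg * Ds) + f * Ds ^ 2) := by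
  have h2 : Dg ^ 2 ≠ 0 := pow_ne_zero 2 hDg
  rw [show a * Dg ^ 2 + 2 * b * (Dg * Ds) + c * Ds ^ 2
      = Dg ^ 2 * (a + 2 * b * (Ds / Dg) + c * (Ds / Dg) ^ 2) by field_simp,
    show d * Dg ^ 2 + 2 * e * (Dg * Ds) + f * Ds ^ 2
      = Dg ^ 2 * (d + 2 * e * (Ds / Dg) + f * (Ds / Dg) ^ 2) by field_simp,
    mul_div_mul_left _ _ h2]

lemma varMDE_eq (γ σ x : ℝ) :
    varMDE γ σ x = A11 γ * Dgamma γ σ x ^ 2 + 2 * A12 γ σ * (Dgamma γ σ x * Dsigma γ σ x)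
      + A22 γ σ * Dsigma γ σ x ^ 2 := by
  simp [varMDE, SigmaMDE, Matrix.mulVec, dotProduct, Fin.sum_univ_two, A11, A12, A22]
  ring

lemma varMLE_eq (γ σ x : ℝ) :
    varMLE γ σ x = (γ + 1) ^ 2 * Dgamma γ σ x ^ 2
      + 2 * (-((γ + 1) * σ)) * (Dgamma γ σ x * Dsigma γ σ x)
      + 2 * (γ + 1) * σ ^ 2 * Dsigma γ σ x ^ 2 := by
  simp [varMLE, SigmaMLE, Matrix.mulVec, dotProduct, Fin.sum_univ_two]
  ring

/-- as `x → ∞`, the relative efficiency `ς²(x)/ς²_{MLE}(x)` tends to a limit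
that depends only on γ, not on σ. -/
theorem relative_efficiency_limit_at_top (γ : ℝ) (hγ : γ ∈ Set.Ioo (0 : ℝ) 1)
    (σ : ℝ) (hσ : 0 < σ) :
    Tendsto (fun x : ℝ => varMDE γ σ x / varMLE γ σ x) atTop
      (𝓝 (-4 * (γ - 2) ^ 4 *
          (γ * (γ * (2 * γ * (4 * γ ^ 2 - 58 * γ + 243) - 683) + 452) - 639) /
        (3 * (3 - 2 * γ) ^ 3 * (γ - 6) ^ 2 * (γ - 3) ^ 2 * (γ + 1) ^ 2))) := by
  obtain ⟨hγ0, hγ1⟩ := hγ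
  have hu := ratio_tendsto γ σ hγ0 hσ
  have hd : ((γ + 1) ^ 2 : ℝ) ≠ 0 := by positivity
  -- the rational function of `u = Dsigma / Dgamma`
  have hcont : Tendsto (fun v : ℝ =>
      (A11 γ + 2 * A12 γ σ * v + A22 γ σ * v ^ 2) /
      ((γ + 1) ^ 2 + 2 * (-((γ + 1) * σ)) * v + 2 * (γ + 1) * σ ^ 2 * v ^ 2)) (𝓝 0)
      (𝓝 (A11 γ / (γ + 1) ^ 2)) := by
    have hnum : Continuous fun v : ℝ => A11 γ + 2 * A12 γ σ * v + A22 γ σ * v ^ 2 := by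
      continuity
    have hden : Continuous fun v : ℝ =>
        (γ + 1) ^ 2 + 2 * (-((γ + 1) * σ)) * v + 2 * (γ + 1) * σ ^ 2 * v ^ 2 := by
      continuity
    have h := (hnum.tendsto 0).div (hden.tendsto 0) (by simpa using hd)
    rw [show A11 γ / (γ + 1) ^ 2 = (A11 γ + 2 * A12 γ σ * 0 + A22 γ σ * 0 ^ 2) /
        ((γ + 1) ^ 2 + 2 * (-((γ + 1) * σ)) * 0 + 2 * (γ + 1) * σ ^ 2 * 0 ^ 2) by simp]
    exact h
  have hcomp := hcont.comp hu
  have hval : A11 γ / (γ + 1) ^ 2 = -4 * (γ - 2) ^ 4 *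
          (γ * (γ * (2 * γ * (4 * γ ^ 2 - 58 * γ + 243) - 683) + 452) - 639) /
        (3 * (3 - 2 * γ) ^ 3 * (γ - 6) ^ 2 * (γ - 3) ^ 2 * (γ + 1) ^ 2) := by
    have h1 : γ - 6 ≠ 0 := by intro h; linarith [sub_eq_zero.mp h]
    have h2 : γ - 3 ≠ 0 := by intro h; linarith [sub_eq_zero.mp h]
    have h3 : 2 * γ - 3 ≠ 0 := by intro h; nlinarith [sub_eq_zero.mp h]
    have h4 : 3 - 2 * γ ≠ 0 := by intro h; nlinarith [sub_eq_zero.mp h]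
    have h5 : γ + 1 ≠ 0 := by positivity
    rw [A11, show (3 - 2 * γ) ^ 3 = -(2 * γ - 3) ^ 3 by ring]
    field_simp
  rw [hval] at hcomp
  refine Tendsto.congr' ?_ hcomp
  filter_upwards [eventually_gt_atTop 0] with x hx
  have hDg : Dgamma γ σ x ≠ 0 := (Dgamma_neg γ σ x hγ0 hσ hx).ne
  show (A11 γ + 2 * A12 γ σ * (Dsigma γ σ x / Dgamma γ σ x)
        + A22 γ σ * (Dsigma γ σ x / Dgamma γ σ x) ^ 2) /
      ((γ + 1) ^ 2 + 2 * (-((γ + 1) * σ)) * (Dsigma γ σ x / Dgamma γ σ x)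
        + 2 * (γ + 1) * σ ^ 2 * (Dsigma γ σ x / Dgamma γ σ x) ^ 2)
      = varMDE γ σ x / varMLE γ σ x
  rw [quad_ratio _ _ _ _ _ _ _ _ hDg, ← varMDE_eq, ← varMLE_eq]
end
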